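/- Under the stated stochastic setup, the transformed PowerStep update satisfies the uniform bound E[‖Φ_β(m_t)‖_2²] ≤ d^{1−β} · 2^β · ((G² + σ²)/(1−γ)²)^β for every t ≥ 1. -/

import Mathlib

open MeasureTheory

section PowerStepAux

lemma ps_integrable_rpow {Ω : Type*} {m0 : MeasurableSpace Ω} {μ : Measure Ω}
    [IsFiniteMeasure μ] {h : Ω → ℝ} (hint : Integrable h μ) (hnn : ∀ ω, 0 ≤ h ω)
    {β : ℝ} (hβ0 : 0 < β) (hβ1 : β ≤ 1) :
    Integrable (fun ω => (h ω) ^ β) μ := by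
  have hsm : AEStronglyMeasurable (fun ω => (h ω) ^ β) μ :=
    (Real.continuous_rpow_const hβ0.le).comp_aestronglyMeasurable hint.aestronglyMeasurable
  refine Integrable.mono' ((integrable_const (1:ℝ)).add hint) hsm ?_
  filter_upwards with ω
  rw [Real.norm_eq_abs, abs_of_nonneg (Real.rpow_nonneg (hnn ω) β)]
  rcases le_total (h ω) 1 with hle | hle
  · have := Real.rpow_le_one (hnn ω) hle hβ0.le
    have := hnn ω; simp only [Pi.add_apply]; linarith
  · have h1 : (h ω) ^ β ≤ (h ω) ^ (1:ℝ) := Real.rpow_le_rpow_of_exponent_le hle hβ1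
    rw [Real.rpow_one] at h1
    simp only [Pi.add_apply]; linarith

lemma ps_integral_rpow_le {Ω : Type*} {m0 : MeasurableSpace Ω} (μ : Measure Ω)
    [IsProbabilityMeasure μ] {h : Ω → ℝ} (hint : Integrable h μ) (hnn : ∀ ω, 0 ≤ h ω)
    {β : ℝ} (hβ0 : 0 < β) (hβ1 : β ≤ 1) {C : ℝ} (hC : 0 < C) (hIC : ∫ ω, h ω ∂μ ≤ C) :
    ∫ ω, (h ω) ^ β ∂μ ≤ C ^ β := by
  have hip := ps_integrable_rpow hint hnn hβ0 hβ1
  have hC1 : 0 < C ^ (1 - β) := Real.rpow_pos_of_pos hC _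
  have key : (∫ ω, (h ω) ^ β ∂μ) * C ^ (1 - β) ≤ C := by
    have h1 : ∫ ω, (h ω) ^ β * C ^ (1 - β) ∂μ ≤ ∫ ω, β * h ω + (1 - β) * C ∂μ := by
      refine integral_mono (hip.mul_const _) ((hint.const_mul β).add (integrable_const _)) ?_
      intro ω
      exact Real.geom_mean_le_arith_mean2_weighted hβ0.le (by linarith) (hnn ω) hC.le (by ring)
    rw [integral_mul_const] at h1
    rw [integral_add (hint.const_mul β) (integrable_const _), integral_const_mul,
      integral_const, probReal_univ, one_smul] at h1
    have : β * ∫ ω, h ω ∂μ + (1 - β) * C ≤ C := by nlinarith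
    linarith
  have hCeq : C ^ β * C ^ (1 - β) = C := by
    rw [← Real.rpow_add hC]; norm_num
  exact le_of_mul_le_mul_right (key.trans_eq hCeq.symm) hC1

lemma ps_sum_rpow_le {d : ℕ} (hd : 1 ≤ d) {β : ℝ} (hβ0 : 0 < β) (hβ1 : β ≤ 1)
    (a : Fin d → ℝ) (ha : ∀ i, 0 ≤ a i) :
    ∑ i, (a i) ^ β ≤ (d : ℝ) ^ (1 - β) * (∑ i, a i) ^ β := by
  set S := ∑ i, a i with hS
  have hS0 : 0 ≤ S := Finset.sum_nonneg fun i _ => ha i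
  have hdpos : (0:ℝ) < d := by exact_mod_cast hd
  rcases hS0.eq_or_lt with hS0' | hSpos
  · have hz : ∀ i ∈ Finset.univ, a i = 0 :=
      (Finset.sum_eq_zero_iff_of_nonneg (fun i _ => ha i)).mp hS0'.symm
    have : ∑ i, (a i) ^ β = 0 := Finset.sum_eq_zero fun i hi => by
      rw [hz i hi, Real.zero_rpow hβ0.ne']
    rw [this]
    positivity
  · set c := S / d with hc
    have hcpos : 0 < c := div_pos hSpos hdpos
    have hc1 : 0 < c ^ (1 - β) := Real.rpow_pos_of_pos hcpos _
    have key : (∑ i, (a i) ^ β) * c ^ (1 - β) ≤ S := by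
      rw [Finset.sum_mul]
      have h1 : ∀ i ∈ Finset.univ, (a i) ^ β * c ^ (1 - β) ≤ β * a i + (1 - β) * c :=
        fun i _ => Real.geom_mean_le_arith_mean2_weighted hβ0.le (by linarith) (ha i)
          hcpos.le (by ring)
      calc ∑ i, (a i) ^ β * c ^ (1 - β) ≤ ∑ i, (β * a i + (1 - β) * c) :=
            Finset.sum_le_sum h1
        _ = β * S + (d : ℝ) * ((1 - β) * c) := by
            rw [Finset.sum_add_distrib, ← Finset.mul_sum, Finset.sum_const,
              Finset.card_univ, Fintype.card_fin, nsmul_eq_mul]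
        _ = S := by
            have : (d : ℝ) * c = S := by rw [hc, mul_div_cancel₀ _ hdpos.ne']
            nlinarith [this]
    have hre : ((d : ℝ) ^ (1 - β) * S ^ β) * c ^ (1 - β) = S := by
      have h1 : S ^ β * S ^ (1 - β) = S := by rw [← Real.rpow_add hSpos]; norm_num
      have hdne : ((d:ℝ) ^ (1 - β)) ≠ 0 := by positivity
      rw [hc, Real.div_rpow hS0 hdpos.le]
      field_simp
      linear_combination h1
    exact le_of_mul_le_mul_right (key.trans_eq hre.symm) hc1

end PowerStepAux

/-- The signed power transform `Φ_β(x)_i = sign(x_i)·|x_i|^β` on `ℝ^d` (with `sign 0 = 0`). -/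
noncomputable def signedPowerTransform (d : ℕ) (β : ℝ) (x : EuclideanSpace ℝ (Fin d)) :
    EuclideanSpace ℝ (Fin d) :=
  WithLp.toLp 2 (fun i => Real.sign (x i) * |x i| ^ β)

lemma ps_norm_sq_le {d : ℕ} (hd : 1 ≤ d) {β : ℝ} (hβ0 : 0 < β) (hβ1 : β ≤ 1)
    (x : EuclideanSpace ℝ (Fin d)) :
    ‖signedPowerTransform d β x‖ ^ 2 ≤ (d : ℝ) ^ (1 - β) * (‖x‖ ^ 2) ^ β := by
  have hy : ‖signedPowerTransform d β x‖ ^ 2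
      = ∑ i, (Real.sign (x i) * |x i| ^ β) ^ 2 := by
    rw [EuclideanSpace.norm_eq, Real.sq_sqrt (Finset.sum_nonneg fun i _ => sq_nonneg _)]
    simp only [signedPowerTransform, PiLp.toLp_apply, Real.norm_eq_abs, sq_abs]
  have hx : ‖x‖ ^ 2 = ∑ i, (x i) ^ 2 := by
    rw [EuclideanSpace.norm_eq, Real.sq_sqrt (Finset.sum_nonneg fun i _ => sq_nonneg _)]
    simp only [Real.norm_eq_abs, sq_abs]
  rw [hy, hx]
  calc ∑ i, (Real.sign (x i) * |x i| ^ β) ^ 2 ≤ ∑ i, ((x i) ^ 2) ^ β := by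
        refine Finset.sum_le_sum fun i _ => ?_
        have hsign : (Real.sign (x i)) ^ 2 ≤ 1 := by
          rcases Real.sign_apply_eq (x i) with h | h | h <;> rw [h] <;> norm_num
        have heq : (|x i| ^ β) ^ 2 = ((x i) ^ 2) ^ β := by
          rw [← Real.rpow_natCast (|x i| ^ β) 2, ← Real.rpow_mul (abs_nonneg _),
            ← sq_abs, ← Real.rpow_natCast |x i| 2, ← Real.rpow_mul (abs_nonneg _),
            mul_comm]
        calc (Real.sign (x i) * |x i| ^ β) ^ 2
            = (Real.sign (x i)) ^ 2 * (|x i| ^ β) ^ 2 := by ring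
          _ ≤ 1 * (|x i| ^ β) ^ 2 := mul_le_mul_of_nonneg_right hsign (sq_nonneg _)
          _ = ((x i) ^ 2) ^ β := by rw [one_mul, heq]
    _ ≤ (d : ℝ) ^ (1 - β) * (∑ i, (x i) ^ 2) ^ β :=
        ps_sum_rpow_le hd hβ0 hβ1 _ fun i => sq_nonneg _

theorem powerstep_transformed_update_bound
    {Ω : Type*} {m0 : MeasurableSpace Ω} (μ : Measure Ω) [IsProbabilityMeasure μ]
    (ℱ : Filtration ℕ m0) (d : ℕ) (hd : 1 ≤ d)
    (f : EuclideanSpace ℝ (Fin d) → ℝ) (hf : Differentiable ℝ f)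
    (G : ℝ) (hG : 0 < G) (hgrad : ∀ x, ‖gradient f x‖ ≤ G)
    (γ : ℝ) (hγ0 : 0 ≤ γ) (hγ1 : γ < 1) (β : ℝ) (hβ0 : 0 < β) (hβ1 : β ≤ 1)
    (η : ℕ → ℝ) (hη : ∀ t, 0 < η t) (σ : ℝ) (hσ : 0 < σ)
    (θ m g : ℕ → Ω → EuclideanSpace ℝ (Fin d))
    (θ₀ : EuclideanSpace ℝ (Fin d)) (hθ0 : ∀ ω, θ 0 ω = θ₀)
    (hm0 : ∀ ω, m 0 ω = 0)
    (hmrec : ∀ t : ℕ, ∀ ω, m (t + 1) ω = γ • m t ω + g (t + 1) ω)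
    (hθrec : ∀ t : ℕ, ∀ ω,
      θ (t + 1) ω = θ t ω - η (t + 1) • signedPowerTransform d β (m (t + 1) ω))
    (hgmeas : ∀ t : ℕ, StronglyMeasurable[ℱ (t + 1)] (g (t + 1)))
    (hθmeas : ∀ t : ℕ, StronglyMeasurable[ℱ t] (θ t))
    (hgint : ∀ t : ℕ, Integrable (g (t + 1)) μ)
    (hg2int : ∀ t : ℕ, Integrable (fun ω => ‖g (t + 1) ω - gradient f (θ t ω)‖ ^ 2) μ)
    (hunbiased : ∀ t : ℕ, μ[g (t + 1) | ℱ t] =ᵐ[μ] fun ω => gradient f (θ t ω))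
    (hvar : ∀ t : ℕ, ∀ᵐ ω ∂μ,
      (μ[fun ω' => ‖g (t + 1) ω' - gradient f (θ t ω')‖ ^ 2 | ℱ t]) ω ≤ σ ^ 2) :
    ∀ t : ℕ, 1 ≤ t → ∫ ω, ‖signedPowerTransform d β (m t ω)‖ ^ 2 ∂μ
      ≤ (d : ℝ) ^ (1 - β) * 2 ^ β * ((G ^ 2 + σ ^ 2) / (1 - γ) ^ 2) ^ β := by
  have h1γ : 0 < 1 - γ := by linarith
  set B : ℝ := 2 * (G ^ 2 + σ ^ 2) with hB
  have hBpos : 0 < B := by positivity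
  set C : ℝ := B / (1 - γ) ^ 2 with hC
  have hCpos : 0 < C := by positivity
  -- strong measurability of m t
  have mm : ∀ t, StronglyMeasurable[m0] (m t) := by
    intro t; induction t with
    | zero =>
      have he : m 0 = fun _ => 0 := funext hm0
      rw [he]; exact stronglyMeasurable_const
    | succ t ih =>
      have he : m (t + 1) = fun ω => γ • m t ω + g (t + 1) ω := funext (hmrec t)
      rw [he]
      exact (ih.const_smul γ).add ((hgmeas t).mono (ℱ.le _))
  -- second moment of stochastic gradients
  have hgn2 : ∀ t, Integrable (fun ω => ‖g (t + 1) ω‖ ^ 2) μ ∧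
      (∫ ω, ‖g (t + 1) ω‖ ^ 2 ∂μ) ≤ B := by
    intro t
    have hsm : AEStronglyMeasurable (fun ω => ‖g (t + 1) ω‖ ^ 2) μ := by
      have he : (fun ω => ‖g (t + 1) ω‖ ^ 2) = fun ω => ‖g (t + 1) ω‖ * ‖g (t + 1) ω‖ := by
        funext ω; ring
      rw [he]
      have hsg := ((hgmeas t).mono (ℱ.le _)).norm
      exact (hsg.mul hsg).aestronglyMeasurable
    have hptw : ∀ ω, ‖g (t + 1) ω‖ ^ 2
        ≤ 2 * ‖g (t + 1) ω - gradient f (θ t ω)‖ ^ 2 + 2 * G ^ 2 := by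
      intro ω
      have h1 : ‖g (t + 1) ω‖ ≤ ‖g (t + 1) ω - gradient f (θ t ω)‖ + G := by
        calc ‖g (t + 1) ω‖ = ‖(g (t + 1) ω - gradient f (θ t ω)) + gradient f (θ t ω)‖ := by
              rw [sub_add_cancel]
          _ ≤ ‖g (t + 1) ω - gradient f (θ t ω)‖ + ‖gradient f (θ t ω)‖ := norm_add_le _ _
          _ ≤ ‖g (t + 1) ω - gradient f (θ t ω)‖ + G := by
              linarith [hgrad (θ t ω)]
      nlinarith [norm_nonneg (g (t + 1) ω), norm_nonneg (g (t + 1) ω - gradient f (θ t ω)),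
        sq_nonneg (‖g (t + 1) ω - gradient f (θ t ω)‖ - G)]
    have hbint : Integrable
        (fun ω => 2 * ‖g (t + 1) ω - gradient f (θ t ω)‖ ^ 2 + 2 * G ^ 2) μ :=
      ((hg2int t).const_mul 2).add (integrable_const _)
    have hint : Integrable (fun ω => ‖g (t + 1) ω‖ ^ 2) μ := by
      refine hbint.mono' hsm ?_
      filter_upwards with ω
      rw [Real.norm_eq_abs, abs_of_nonneg (sq_nonneg _)]
      exact hptw ω
    refine ⟨hint, ?_⟩
    have hv : ∫ ω, ‖g (t + 1) ω - gradient f (θ t ω)‖ ^ 2 ∂μ ≤ σ ^ 2 := by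
      rw [← integral_condExp (ℱ.le t)]
      calc ∫ ω, (μ[fun ω' => ‖g (t + 1) ω' - gradient f (θ t ω')‖ ^ 2 | ℱ t]) ω ∂μ
          ≤ ∫ _ω, σ ^ 2 ∂μ :=
            integral_mono_ae integrable_condExp (integrable_const _) (hvar t)
        _ = σ ^ 2 := by simp
    calc ∫ ω, ‖g (t + 1) ω‖ ^ 2 ∂μ
        ≤ ∫ ω, (2 * ‖g (t + 1) ω - gradient f (θ t ω)‖ ^ 2 + 2 * G ^ 2) ∂μ :=
          integral_mono hint hbint hptw
      _ = 2 * (∫ ω, ‖g (t + 1) ω - gradient f (θ t ω)‖ ^ 2 ∂μ) + 2 * G ^ 2 := by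
          rw [integral_add ((hg2int t).const_mul 2) (integrable_const _), integral_const_mul,
            integral_const, probReal_univ, one_smul]
      _ ≤ B := by rw [hB]; nlinarith
  -- second moment of the momentum
  have hm2 : ∀ t, Integrable (fun ω => ‖m t ω‖ ^ 2) μ ∧ (∫ ω, ‖m t ω‖ ^ 2 ∂μ) ≤ C := by
    intro t; induction t with
    | zero =>
      have he : (fun ω => ‖m 0 ω‖ ^ 2) = fun _ => (0:ℝ) := by
        funext ω; rw [hm0 ω]; simp
      rw [he]
      exact ⟨integrable_const _, by simp [hCpos.le]⟩
    | succ t ih =>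
      have hptw : ∀ ω, ‖m (t + 1) ω‖ ^ 2
          ≤ γ * ‖m t ω‖ ^ 2 + ‖g (t + 1) ω‖ ^ 2 / (1 - γ) := by
        intro ω
        have h1 : ‖m (t + 1) ω‖ ≤ γ * ‖m t ω‖ + ‖g (t + 1) ω‖ := by
          rw [hmrec t ω]
          calc ‖γ • m t ω + g (t + 1) ω‖ ≤ ‖γ • m t ω‖ + ‖g (t + 1) ω‖ := norm_add_le _ _
            _ = γ * ‖m t ω‖ + ‖g (t + 1) ω‖ := by
                rw [norm_smul, Real.norm_eq_abs, abs_of_nonneg hγ0]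
        have h2 : ‖m (t + 1) ω‖ ^ 2 ≤ (γ * ‖m t ω‖ + ‖g (t + 1) ω‖) ^ 2 := by
          nlinarith [norm_nonneg (m (t + 1) ω), norm_nonneg (m t ω),
            norm_nonneg (g (t + 1) ω), mul_nonneg hγ0 (norm_nonneg (m t ω))]
        have h3 : (1 - γ) * (‖g (t + 1) ω‖ ^ 2 / (1 - γ)) = ‖g (t + 1) ω‖ ^ 2 := by
          field_simp
        nlinarith [mul_nonneg hγ0 (sq_nonneg ((1 - γ) * ‖m t ω‖ - ‖g (t + 1) ω‖)), h2, h3, h1γ]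
      have hbint : Integrable (fun ω => γ * ‖m t ω‖ ^ 2 + ‖g (t + 1) ω‖ ^ 2 / (1 - γ)) μ :=
        (ih.1.const_mul γ).add ((hgn2 t).1.div_const _)
      have hsm : AEStronglyMeasurable (fun ω => ‖m (t + 1) ω‖ ^ 2) μ := by
        have he : (fun ω => ‖m (t + 1) ω‖ ^ 2) = fun ω => ‖m (t + 1) ω‖ * ‖m (t + 1) ω‖ := by
          funext ω; ring
        rw [he]
        exact ((mm (t + 1)).norm.mul (mm (t + 1)).norm).aestronglyMeasurable
      have hint : Integrable (fun ω => ‖m (t + 1) ω‖ ^ 2) μ := by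
        refine hbint.mono' hsm ?_
        filter_upwards with ω
        rw [Real.norm_eq_abs, abs_of_nonneg (sq_nonneg _)]
        exact hptw ω
      refine ⟨hint, ?_⟩
      calc ∫ ω, ‖m (t + 1) ω‖ ^ 2 ∂μ
          ≤ ∫ ω, (γ * ‖m t ω‖ ^ 2 + ‖g (t + 1) ω‖ ^ 2 / (1 - γ)) ∂μ :=
            integral_mono hint hbint hptw
        _ = γ * (∫ ω, ‖m t ω‖ ^ 2 ∂μ) + (∫ ω, ‖g (t + 1) ω‖ ^ 2 ∂μ) / (1 - γ) := by
            rw [integral_add (ih.1.const_mul γ) ((hgn2 t).1.div_const _), integral_const_mul,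
              integral_div]
        _ ≤ γ * C + B / (1 - γ) := by
            have h4 := ih.2
            have h5 := (hgn2 t).2
            have h6 : (∫ ω, ‖g (t + 1) ω‖ ^ 2 ∂μ) / (1 - γ) ≤ B / (1 - γ) :=
              by gcongr
            have h7 : γ * (∫ ω, ‖m t ω‖ ^ 2 ∂μ) ≤ γ * C := mul_le_mul_of_nonneg_left h4 hγ0
            linarith
        _ = C := by rw [hC]; field_simp; ring
  -- conclusion
  intro t _
  have hnn : ∀ ω, (0:ℝ) ≤ ‖m t ω‖ ^ 2 := fun ω => sq_nonneg _
  have hib : Integrable (fun ω => (‖m t ω‖ ^ 2) ^ β) μ :=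
    ps_integrable_rpow (hm2 t).1 hnn hβ0 hβ1
  have step2 : ∫ ω, (‖m t ω‖ ^ 2) ^ β ∂μ ≤ C ^ β :=
    ps_integral_rpow_le μ (hm2 t).1 hnn hβ0 hβ1 hCpos (hm2 t).2
  have hCb : C ^ β = 2 ^ β * ((G ^ 2 + σ ^ 2) / (1 - γ) ^ 2) ^ β := by
    rw [hC, hB, mul_div_assoc, Real.mul_rpow (by norm_num) (by positivity)]
  calc ∫ ω, ‖signedPowerTransform d β (m t ω)‖ ^ 2 ∂μ
      ≤ ∫ ω, (d : ℝ) ^ (1 - β) * (‖m t ω‖ ^ 2) ^ β ∂μ := by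
        refine integral_mono_of_nonneg (Filter.Eventually.of_forall fun ω => sq_nonneg _)
          (hib.const_mul _) (Filter.Eventually.of_forall fun ω => ?_)
        exact ps_norm_sq_le hd hβ0 hβ1 (m t ω)
    _ = (d : ℝ) ^ (1 - β) * ∫ ω, (‖m t ω‖ ^ 2) ^ β ∂μ := integral_const_mul _ _
    _ ≤ (d : ℝ) ^ (1 - β) * C ^ β := by
        have hdp : (0:ℝ) ≤ (d : ℝ) ^ (1 - β) := by positivity
        exact mul_le_mul_of_nonneg_left step2 hdp
    _ = (d : ℝ) ^ (1 - β) * 2 ^ β * ((G ^ 2 + σ ^ 2) / (1 - γ) ^ 2) ^ β := by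
        rw [hCb, mul_assoc]
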